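/- arXiv:2006.05114 — 2 statements merged into one kernel-verified Lean document; each statement's English description precedes it below -/
import Mathlib

section
/- Let n ≥ 2, ε > 0, τ ≥ 0, and define the nonlinear flow Φ_B^τ(w) = w·exp(−iτ f_n^ε(|w|²)) pointwise. Then for any two complex numbers v, w, |Φ_B^τ(v) − Φ_B^τ(w)| ≤ (1 + 4nτ)·|v − w|. -/
open Real Complex MeasureTheory

/-- `q_n^ε`, the polynomial part of the locally regularized logarithm on `[0, ε²)`. -/
noncomputable def qfun (n : ℕ) (ε ρ : ℝ) : ℝ :=
  Real.log (ε ^ 2) - ((n + 1 : ℝ) / n) * (1 - ρ / ε ^ 2) ^ n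
    - ∑ k ∈ Finset.Icc 1 (n - 1), (1 / (k : ℝ)) * (1 - ρ / ε ^ 2) ^ k

/-- The locally regularized logarithm `f_n^ε` of the LER construction. -/
noncomputable def freg (n : ℕ) (ε ρ : ℝ) : ℝ :=
  if ε ^ 2 ≤ ρ then Real.log ρ else qfun n ε ρ

/-- The pointwise nonlinear flow `Φ_B^τ(w) = w exp(−iτ f_n^ε(|w|²))`. -/
noncomputable def PhiB (n : ℕ) (ε τ : ℝ) (w : ℂ) : ℂ :=
  w * Complex.exp (-(Complex.I * τ * (freg n ε (‖w‖ ^ 2) : ℝ)))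

lemma exp_I_sub_one_le (θ : ℝ) : ‖Complex.exp (θ * Complex.I) - 1‖ ≤ |θ| := by
  rw [Complex.exp_mul_I]
  have h1 : (Complex.cos θ + Complex.sin θ * Complex.I - 1) =
      Complex.mk (Real.cos θ - 1) (Real.sin θ) := by
    apply Complex.ext <;> simp [Complex.cos_ofReal_re, Complex.sin_ofReal_re]
  rw [h1, Complex.norm_def, Complex.normSq_mk, ← Real.sqrt_sq_eq_abs]
  apply Real.sqrt_le_sqrt
  have hc := Real.one_sub_sq_div_two_le_cos (x := θ)
  have hs := Real.sin_sq_add_cos_sq θ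
  nlinarith [Real.cos_le_one θ]

lemma pow_sub_pow_le_k {x y : ℝ} (hy : 0 ≤ y) (hxy : y ≤ x) (hx : x ≤ 1) (k : ℕ) :
    x ^ k - y ^ k ≤ k * (x - y) := by
  induction k with
  | zero => simp
  | succ k ih =>
    have hxk : x ^ k ≤ 1 := pow_le_one₀ (hy.trans hxy) hx
    have hyk : 0 ≤ y ^ k := pow_nonneg hy k
    have h2 : y ^ k ≤ x ^ k := pow_le_pow_left₀ hy hxy k
    calc x ^ (k+1) - y ^ (k+1) = x * (x ^ k - y ^ k) + y ^ k * (x - y) := by ring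
      _ ≤ 1 * (k * (x - y)) + 1 * (x - y) := by
          apply add_le_add
          · exact mul_le_mul hx (le_trans (by linarith) ih) (by linarith) one_pos.le
          · exact mul_le_mul (h2.trans hxk) le_rfl (by linarith) one_pos.le
      _ = (↑(k+1) : ℝ) * (x - y) := by push_cast; ring

lemma qfun_facts (n : ℕ) (hn : 2 ≤ n) (ε : ℝ) (hε : 0 < ε) {ρ₁ ρ₂ : ℝ}
    (h1 : 0 ≤ ρ₁) (h12 : ρ₁ ≤ ρ₂) (h2 : ρ₂ ≤ ε ^ 2) :
    qfun n ε ρ₁ ≤ qfun n ε ρ₂ ∧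
    qfun n ε ρ₂ - qfun n ε ρ₁ ≤ 2 * n * (ρ₂ - ρ₁) / ε ^ 2 := by
  have hε2 : (0:ℝ) < ε ^ 2 := by positivity
  set x : ℝ := 1 - ρ₁ / ε ^ 2 with hxdef
  set y : ℝ := 1 - ρ₂ / ε ^ 2 with hydef
  have hy : 0 ≤ y := by
    have : ρ₂ / ε ^ 2 ≤ 1 := (div_le_one hε2).2 h2
    simp only [hydef]; linarith
  have hxy : y ≤ x := by
    have : ρ₁ / ε ^ 2 ≤ ρ₂ / ε ^ 2 := div_le_div_of_nonneg_right h12 hε2.le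
    simp only [hxdef, hydef]; linarith
  have hx : x ≤ 1 := by
    have : 0 ≤ ρ₁ / ε ^ 2 := by positivity
    simp only [hxdef]; linarith
  have hdiff : qfun n ε ρ₂ - qfun n ε ρ₁ =
      ((n + 1 : ℝ) / n) * (x ^ n - y ^ n)
        + ∑ k ∈ Finset.Icc 1 (n - 1), (1 / (k:ℝ)) * (x ^ k - y ^ k) := by
    simp only [qfun, ← hxdef, ← hydef, mul_sub, Finset.sum_sub_distrib]
    ring
  have hn0 : (0:ℝ) < n := by positivity
  have hcoef : (0:ℝ) ≤ (n + 1 : ℝ) / n := by positivity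
  have hterm : ∀ k ∈ Finset.Icc 1 (n-1), (0:ℝ) ≤ (1 / (k:ℝ)) * (x ^ k - y ^ k) := by
    intro k _
    have h := pow_le_pow_left₀ hy hxy k
    have : (0:ℝ) ≤ 1/(k:ℝ) := by positivity
    nlinarith
  constructor
  · have h1' : 0 ≤ ((n + 1 : ℝ) / n) * (x ^ n - y ^ n) := by
      have h := pow_le_pow_left₀ hy hxy n
      nlinarith
    have h2' : 0 ≤ ∑ k ∈ Finset.Icc 1 (n-1), (1 / (k:ℝ)) * (x ^ k - y ^ k) :=
      Finset.sum_nonneg hterm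
    linarith [hdiff]
  · rw [hdiff]
    have hb1 : ((n + 1 : ℝ) / n) * (x ^ n - y ^ n) ≤ (n + 1) * (x - y) := by
      calc ((n + 1 : ℝ) / n) * (x ^ n - y ^ n) ≤ ((n + 1 : ℝ) / n) * (n * (x - y)) :=
            mul_le_mul_of_nonneg_left (pow_sub_pow_le_k hy hxy hx n) hcoef
        _ = (n + 1) * (x - y) := by field_simp
    have hb2 : ∑ k ∈ Finset.Icc 1 (n-1), (1 / (k:ℝ)) * (x ^ k - y ^ k)
        ≤ (n - 1 : ℝ) * (x - y) := by
      have hle : ∀ k ∈ Finset.Icc 1 (n-1), (1 / (k:ℝ)) * (x ^ k - y ^ k) ≤ (x - y) := by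
        intro k hk
        have hk1 : 1 ≤ k := (Finset.mem_Icc.1 hk).1
        have hk0 : (0:ℝ) < k := by exact_mod_cast hk1
        calc (1 / (k:ℝ)) * (x ^ k - y ^ k) ≤ (1 / (k:ℝ)) * (k * (x - y)) :=
              mul_le_mul_of_nonneg_left (pow_sub_pow_le_k hy hxy hx k) (by positivity)
          _ = x - y := by field_simp
      calc ∑ k ∈ Finset.Icc 1 (n-1), (1 / (k:ℝ)) * (x ^ k - y ^ k)
          ≤ ∑ _k ∈ Finset.Icc 1 (n-1), (x - y) := Finset.sum_le_sum hle
        _ = (n - 1 : ℝ) * (x - y) := by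
            rw [Finset.sum_const, Nat.card_Icc]
            have h' : ((n - 1 + 1 - 1 : ℕ) : ℝ) = (n : ℝ) - 1 := by
              have he : n - 1 + 1 - 1 = n - 1 := by omega
              rw [he]
              have h1n : (1:ℕ) ≤ n := by omega
              push_cast [Nat.cast_sub h1n]
              ring
            rw [nsmul_eq_mul, h']
    have hxysub : x - y = (ρ₂ - ρ₁) / ε ^ 2 := by
      simp only [hxdef, hydef]; field_simp; ring
    calc ((n + 1 : ℝ) / n) * (x ^ n - y ^ n)
          + ∑ k ∈ Finset.Icc 1 (n-1), (1 / (k:ℝ)) * (x ^ k - y ^ k)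
        ≤ (n + 1) * (x - y) + (n - 1) * (x - y) := add_le_add hb1 hb2
      _ = 2 * n * (x - y) := by ring
      _ = 2 * n * (ρ₂ - ρ₁) / ε ^ 2 := by rw [hxysub]; ring

lemma freg_eq_qfun (n : ℕ) (hn : 2 ≤ n) (ε : ℝ) (hε : 0 < ε) {ρ : ℝ} (h : ρ ≤ ε ^ 2) :
    freg n ε ρ = qfun n ε ρ := by
  rcases lt_or_eq_of_le h with h' | h'
  · rw [freg, if_neg (not_le.2 h')]
  · subst h'
    rw [freg, if_pos le_rfl, qfun]
    have hone : 1 - ε ^ 2 / ε ^ 2 = (0:ℝ) := by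
      field_simp; norm_num
    rw [hone, zero_pow (by omega : n ≠ 0), Finset.sum_eq_zero]
    · ring
    · intro k hk
      have hk0 : k ≠ 0 := by have := (Finset.mem_Icc.1 hk).1; omega
      rw [zero_pow hk0, mul_zero]

lemma aux_log (n : ℕ) (ε : ℝ) (hε : 0 < ε) {a b : ℝ}
    (hεa : ε ≤ a) (hab : a ≤ b) :
    freg n ε (a ^ 2) ≤ freg n ε (b ^ 2) ∧
      a * (freg n ε (b ^ 2) - freg n ε (a ^ 2)) ≤ 2 * (b - a) := by
  have h0a : 0 < a := hε.trans_le hεa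
  have h0b : 0 < b := h0a.trans_le hab
  have ha2 : ε ^ 2 ≤ a ^ 2 := by nlinarith
  have hb2 : ε ^ 2 ≤ b ^ 2 := by nlinarith
  rw [freg, if_pos ha2, freg, if_pos hb2]
  have hmono : Real.log (a ^ 2) ≤ Real.log (b ^ 2) :=
    Real.log_le_log (by positivity) (by nlinarith)
  refine ⟨hmono, ?_⟩
  have hd : Real.log (b ^ 2) - Real.log (a ^ 2) = 2 * Real.log (b / a) := by
    rw [Real.log_div h0b.ne' h0a.ne', Real.log_pow, Real.log_pow]
    push_cast; ring
  have hle : Real.log (b / a) ≤ b / a - 1 := Real.log_le_sub_one_of_pos (by positivity)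
  have hfld : a * (b / a - 1) = b - a := by field_simp
  rw [hd]
  nlinarith [mul_le_mul_of_nonneg_left hle h0a.le]

lemma aux_q (n : ℕ) (hn : 2 ≤ n) (ε : ℝ) (hε : 0 < ε) {a b : ℝ}
    (ha : 0 ≤ a) (hab : a ≤ b) (hbε : b ≤ ε) :
    freg n ε (a ^ 2) ≤ freg n ε (b ^ 2) ∧
      a * (freg n ε (b ^ 2) - freg n ε (a ^ 2)) ≤ 4 * n * (b - a) := by
  have hb : 0 ≤ b := ha.trans hab
  have ha2 : a ^ 2 ≤ b ^ 2 := by nlinarith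
  have hb2 : b ^ 2 ≤ ε ^ 2 := by nlinarith
  have hq := qfun_facts n hn ε hε (by positivity : (0:ℝ) ≤ a ^ 2) ha2 hb2
  rw [freg_eq_qfun n hn ε hε (ha2.trans hb2), freg_eq_qfun n hn ε hε hb2]
  refine ⟨hq.1, ?_⟩
  have hε2 : (0:ℝ) < ε ^ 2 := by positivity
  have hn0 : (0:ℝ) ≤ (n:ℝ) := by positivity
  have hstep : a * (qfun n ε (b ^ 2) - qfun n ε (a ^ 2))
      ≤ a * (2 * n * (b ^ 2 - a ^ 2) / ε ^ 2) :=
    mul_le_mul_of_nonneg_left hq.2 ha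
  refine hstep.trans ?_
  rw [mul_div_assoc', div_le_iff₀ hε2]
  have e1 : a * b ≤ ε * ε := mul_le_mul (hab.trans hbε) hbε hb hε.le
  have e2 : a * a ≤ ε * ε := mul_le_mul (hab.trans hbε) (hab.trans hbε) ha hε.le
  have e3 : 0 ≤ (n:ℝ) * (b - a) * (2 * (ε * ε) - (a * b + a * a)) := by
    apply mul_nonneg (mul_nonneg hn0 (by linarith))
    linarith
  nlinarith [e3]

/-- Key monotone Lipschitz lemma. -/
lemma freg_key (n : ℕ) (hn : 2 ≤ n) (ε : ℝ) (hε : 0 < ε) {a b : ℝ}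
    (ha : 0 ≤ a) (hab : a ≤ b) :
    freg n ε (a ^ 2) ≤ freg n ε (b ^ 2) ∧
      a * (freg n ε (b ^ 2) - freg n ε (a ^ 2)) ≤ 4 * n * (b - a) := by
  have hn2 : (2:ℝ) ≤ (n:ℝ) := by exact_mod_cast hn
  rcases le_or_gt ε a with h1 | h1
  · obtain ⟨hm, hl⟩ := aux_log n ε hε h1 hab
    exact ⟨hm, hl.trans (by nlinarith)⟩
  rcases le_or_gt b ε with h2 | h2
  · exact aux_q n hn ε hε ha hab h2
  · -- a < ε < b
    obtain ⟨hm1, hl1⟩ := aux_q n hn ε hε ha h1.le le_rfl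
    obtain ⟨hm2, hl2⟩ := aux_log n ε hε le_rfl h2.le
    refine ⟨hm1.trans hm2, ?_⟩
    have haε : a * (freg n ε (b ^ 2) - freg n ε (ε ^ 2))
        ≤ ε * (freg n ε (b ^ 2) - freg n ε (ε ^ 2)) :=
      mul_le_mul_of_nonneg_right h1.le (by linarith)
    nlinarith

lemma main_aux (n : ℕ) (hn : 2 ≤ n) (ε : ℝ) (hε : 0 < ε) (τ : ℝ) (hτ : 0 ≤ τ)
    (v w : ℂ) (hvw : ‖v‖ ≤ ‖w‖) :
    ‖PhiB n ε τ v - PhiB n ε τ w‖ ≤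
      (1 + 4 * n * τ) * ‖v - w‖ := by
  set fv := freg n ε (‖v‖ ^ 2) with hfv
  set fw := freg n ε (‖w‖ ^ 2) with hfw
  obtain ⟨hmono, hlip⟩ := freg_key n hn ε hε (norm_nonneg v) hvw
  have hexp1 : ‖Complex.exp (-(Complex.I * τ * (fw:ℝ)))‖ = 1 := by
    have h : -(Complex.I * (τ:ℂ) * ((fw:ℝ):ℂ)) = ((-(τ * fw) : ℝ) : ℂ) * Complex.I := by
      push_cast; ring
    rw [h, Complex.norm_exp_ofReal_mul_I]
  have hdec : PhiB n ε τ v - PhiB n ε τ w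
      = (v - w) * Complex.exp (-(Complex.I * τ * (fw:ℝ)))
        + v * (Complex.exp (-(Complex.I * τ * (fv:ℝ)))
            - Complex.exp (-(Complex.I * τ * (fw:ℝ)))) := by
    simp only [PhiB, ← hfv, ← hfw]; ring
  have hdiffexp : Complex.exp (-(Complex.I * τ * (fv:ℝ)))
        - Complex.exp (-(Complex.I * τ * (fw:ℝ)))
      = Complex.exp (-(Complex.I * τ * (fw:ℝ)))
        * (Complex.exp (((τ * (fw - fv) : ℝ) : ℂ) * Complex.I) - 1) := by
    have h : (-(Complex.I * (τ:ℂ) * ((fv:ℝ):ℂ)))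
        = (-(Complex.I * (τ:ℂ) * ((fw:ℝ):ℂ))) + ((τ * (fw - fv) : ℝ) : ℂ) * Complex.I := by
      push_cast; ring
    rw [h, Complex.exp_add]; ring
  have habs_delta : ‖Complex.exp (-(Complex.I * τ * (fv:ℝ)))
        - Complex.exp (-(Complex.I * τ * (fw:ℝ)))‖ ≤ τ * (fw - fv) := by
    rw [hdiffexp, norm_mul, hexp1, one_mul]
    refine (exp_I_sub_one_le (τ * (fw - fv))).trans_eq ?_
    exact abs_of_nonneg (by nlinarith)
  have hsub : ‖w‖ - ‖v‖ ≤ ‖v - w‖ := by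
    rw [norm_sub_rev]
    exact norm_sub_norm_le w v
  have hτf : 0 ≤ τ * (fw - fv) := by nlinarith
  calc ‖PhiB n ε τ v - PhiB n ε τ w‖
      ≤ ‖(v - w) * Complex.exp (-(Complex.I * τ * (fw:ℝ)))‖
        + ‖v * (Complex.exp (-(Complex.I * τ * (fv:ℝ)))
            - Complex.exp (-(Complex.I * τ * (fw:ℝ))))‖ := by
        rw [hdec]; exact norm_add_le _ _
    _ = ‖v - w‖ + ‖v‖
          * ‖Complex.exp (-(Complex.I * τ * (fv:ℝ)))
            - Complex.exp (-(Complex.I * τ * (fw:ℝ)))‖ := by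
        rw [norm_mul, norm_mul, hexp1, mul_one]
    _ ≤ ‖v - w‖ + ‖v‖ * (τ * (fw - fv)) := by
        have := mul_le_mul_of_nonneg_left habs_delta (norm_nonneg v)
        linarith
    _ ≤ ‖v - w‖ + τ * (4 * n * (‖w‖ - ‖v‖)) := by
        have h := mul_le_mul_of_nonneg_left hlip hτ
        nlinarith
    _ ≤ ‖v - w‖ + 4 * n * τ * ‖v - w‖ := by
        have hn0 : (0:ℝ) ≤ 4 * n * τ := by positivity
        nlinarith
    _ = (1 + 4 * n * τ) * ‖v - w‖ := by ring

/-- Pointwise Lipschitz stability of the nonlinear flow: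
`|Φ_B^τ(v) − Φ_B^τ(w)| ≤ (1 + 4nτ)|v − w|` for `τ ≥ 0`. -/
theorem stmt15 (n : ℕ) (hn : 2 ≤ n) (ε : ℝ) (hε : 0 < ε) (τ : ℝ) (hτ : 0 ≤ τ)
    (v w : ℂ) :
    ‖PhiB n ε τ v - PhiB n ε τ w‖ ≤
      (1 + 4 * n * τ) * ‖v - w‖ := by
  rcases le_total (‖v‖) (‖w‖) with h | h
  · exact main_aux n hn ε hε τ hτ v w h
  · have := main_aux n hn ε hε τ hτ w v h
    rw [show PhiB n ε τ v - PhiB n ε τ w = -(PhiB n ε τ w - PhiB n ε τ v) by ring,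
      show v - w = -(w - v) by ring, norm_neg, norm_neg]
    exact this
end

section
/- Let n ≥ 2, ε > 0, τ ∈ ℝ, and let w₀ ∈ H¹(ℝ) be complex-valued. Then Φ_B^τ(w₀) := w₀·exp(−iτ f_n^ε(|w₀|²)) satisfies ‖Φ_B^τ(w₀)‖_{L²} = ‖w₀‖_{L²} and ‖∂_x Φ_B^τ(w₀)‖_{L²} ≤ (1 + 6|τ|)‖∂_x w₀‖_{L²}. -/
open Real Complex MeasureTheory

/-- The derivative of `qfun`. -/
noncomputable def derq (n : ℕ) (ε ρ : ℝ) : ℝ :=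
  ((n + 1 : ℝ) / ε ^ 2) * (1 - ρ / ε ^ 2) ^ (n - 1)
    + ∑ k ∈ Finset.Icc 1 (n - 1), (1 / ε ^ 2) * (1 - ρ / ε ^ 2) ^ (k - 1)

/-- The derivative of `freg`. -/
noncomputable def fder (n : ℕ) (ε ρ : ℝ) : ℝ :=
  if ε ^ 2 ≤ ρ then ρ⁻¹ else derq n ε ρ

lemma bernoulli_aux (m : ℕ) {t : ℝ} (ht0 : 0 ≤ t) (ht1 : t ≤ 1) :
    (1 - t) ^ m * (1 + m * t) ≤ 1 := by
  induction m with
  | zero => simp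
  | succ m ih =>
    have h1 : (0:ℝ) ≤ 1 - t := by linarith
    have key : (1 - t) * (1 + (m + 1 : ℕ) * t) ≤ 1 + m * t := by
      push_cast
      nlinarith [mul_nonneg (Nat.cast_nonneg m : (0:ℝ) ≤ m) (sq_nonneg t), sq_nonneg t]
    calc (1 - t) ^ (m + 1) * (1 + (m+1 : ℕ) * t)
        = (1 - t) ^ m * ((1 - t) * (1 + (m+1 : ℕ) * t)) := by ring
      _ ≤ (1 - t) ^ m * (1 + m * t) := by
          apply mul_le_mul_of_nonneg_left key (pow_nonneg h1 m)
      _ ≤ 1 := ih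

lemma hasDerivAt_qfun (n : ℕ) (hn : 1 ≤ n) {ε : ℝ} (hε : 0 < ε) (ρ : ℝ) :
    HasDerivAt (qfun n ε) (derq n ε ρ) ρ := by
  have hε2 : (ε : ℝ) ^ 2 ≠ 0 := by positivity
  have hu : HasDerivAt (fun ρ : ℝ => 1 - ρ / ε ^ 2) (-(ε ^ 2)⁻¹) ρ := by
    simpa using ((hasDerivAt_id ρ).div_const (ε ^ 2)).const_sub 1
  have hpow : ∀ k : ℕ, HasDerivAt (fun ρ : ℝ => (1 - ρ / ε ^ 2) ^ k)
      ((k : ℝ) * (1 - ρ / ε ^ 2) ^ (k - 1) * (-(ε ^ 2)⁻¹)) ρ := fun k => hu.pow k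
  have hsum : HasDerivAt (fun ρ : ℝ => ∑ k ∈ Finset.Icc 1 (n - 1),
      (1 / (k : ℝ)) * (1 - ρ / ε ^ 2) ^ k)
      (∑ k ∈ Finset.Icc 1 (n - 1), -((1 / ε ^ 2) * (1 - ρ / ε ^ 2) ^ (k - 1))) ρ := by
    apply HasDerivAt.fun_sum
    intro k hk
    have hk1 : 1 ≤ k := (Finset.mem_Icc.mp hk).1
    have hkne : (k : ℝ) ≠ 0 := by positivity
    have := ((hpow k).const_mul (1 / (k : ℝ)))
    refine this.congr_deriv ?_
    field_simp
  have hmain : HasDerivAt (qfun n ε)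
      (0 - ((n + 1 : ℝ) / n) * ((n : ℝ) * (1 - ρ / ε ^ 2) ^ (n - 1) * (-(ε ^ 2)⁻¹))
        - ∑ k ∈ Finset.Icc 1 (n - 1), -((1 / ε ^ 2) * (1 - ρ / ε ^ 2) ^ (k - 1))) ρ := by
    exact (((hasDerivAt_const ρ (Real.log (ε ^ 2))).sub ((hpow n).const_mul _)).sub hsum)
  convert hmain using 1
  have hnne : (n : ℝ) ≠ 0 := by positivity
  rw [derq, Finset.sum_neg_distrib]
  field_simp
  ring

lemma qfun_eps (n : ℕ) (hn : 1 ≤ n) {ε : ℝ} (hε : 0 < ε) :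
    qfun n ε (ε ^ 2) = Real.log (ε ^ 2) := by
  have hε2 : (ε : ℝ) ^ 2 ≠ 0 := by positivity
  have h0 : 1 - ε ^ 2 / ε ^ 2 = (0:ℝ) := by rw [div_self hε2, sub_self]
  rw [qfun, h0]
  rw [zero_pow (by omega), Finset.sum_eq_zero, mul_zero]
  · ring
  · intro k hk
    have hk1 : 1 ≤ k := (Finset.mem_Icc.mp hk).1
    rw [zero_pow (by omega), mul_zero]

lemma derq_eps (n : ℕ) (hn : 2 ≤ n) {ε : ℝ} (hε : 0 < ε) :
    derq n ε (ε ^ 2) = (ε ^ 2)⁻¹ := by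
  have hε2 : (ε : ℝ) ^ 2 ≠ 0 := by positivity
  have h0 : 1 - ε ^ 2 / ε ^ 2 = (0:ℝ) := by rw [div_self hε2, sub_self]
  rw [derq, h0]
  rw [zero_pow (by omega), mul_zero, zero_add]
  rw [Finset.sum_eq_single 1]
  · simp
  · intro k hk hk1
    have h1 : 1 ≤ k := (Finset.mem_Icc.mp hk).1
    rw [zero_pow (by omega), mul_zero]
  · intro h
    exfalso
    exact h (Finset.mem_Icc.mpr ⟨le_refl 1, by omega⟩)

lemma hasDerivAt_freg (n : ℕ) (hn : 2 ≤ n) {ε : ℝ} (hε : 0 < ε) {ρ : ℝ} (hρ : 0 ≤ ρ) :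
    HasDerivAt (freg n ε) (fder n ε ρ) ρ := by
  have hn1 : 1 ≤ n := by omega
  have hε2 : (0:ℝ) < ε ^ 2 := by positivity
  rcases lt_trichotomy ρ (ε ^ 2) with hlt | heq | hgt
  · have : fder n ε ρ = derq n ε ρ := if_neg (not_le.mpr hlt)
    rw [this]
    apply (hasDerivAt_qfun n hn1 hε ρ).congr_of_eventuallyEq
    filter_upwards [Iio_mem_nhds hlt] with y hy
    exact if_neg (not_le.mpr hy)
  · subst heq
    have : fder n ε (ε ^ 2) = (ε ^ 2)⁻¹ := by rw [fder, if_pos le_rfl]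
    rw [this]
    have h1 : HasDerivWithinAt (freg n ε) (ε ^ 2)⁻¹ (Set.Iic (ε ^ 2)) (ε ^ 2) := by
      have hq := (hasDerivAt_qfun n hn1 hε (ε ^ 2)).hasDerivWithinAt
        (s := Set.Iic (ε ^ 2))
      rw [derq_eps n hn hε] at hq
      apply hq.congr
      · intro y hy
        rcases eq_or_lt_of_le (Set.mem_Iic.mp hy) with h | h
        · rw [h, freg, if_pos le_rfl, qfun_eps n hn1 hε]
        · exact if_neg (not_le.mpr h)
      · rw [freg, if_pos le_rfl, qfun_eps n hn1 hε]
    have h2 : HasDerivWithinAt (freg n ε) (ε ^ 2)⁻¹ (Set.Ici (ε ^ 2)) (ε ^ 2) := by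
      have hl := (Real.hasDerivAt_log (ne_of_gt hε2)).hasDerivWithinAt
        (s := Set.Ici (ε ^ 2))
      apply hl.congr
      · intro y hy
        exact if_pos hy
      · exact if_pos le_rfl
    have := h1.union h2
    rw [Set.Iic_union_Ici] at this
    exact this.hasDerivAt (by simp)
  · have hρ0 : ρ ≠ 0 := ne_of_gt (lt_trans hε2 hgt)
    have : fder n ε ρ = ρ⁻¹ := if_pos hgt.le
    rw [this]
    apply (Real.hasDerivAt_log hρ0).congr_of_eventuallyEq
    filter_upwards [Ioi_mem_nhds hgt] with y hy
    exact if_pos hy.le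

lemma fder_nonneg_aux (n : ℕ) (hn : 2 ≤ n) {ε : ℝ} (hε : 0 < ε) {ρ : ℝ} (hρ : 0 ≤ ρ)
    (hlt : ρ < ε ^ 2) : 0 ≤ derq n ε ρ := by
  have hε2 : (0:ℝ) < ε ^ 2 := by positivity
  have hu0 : 0 ≤ 1 - ρ / ε ^ 2 := by
    rw [sub_nonneg, div_le_one hε2]; exact hlt.le
  apply add_nonneg
  · positivity
  · apply Finset.sum_nonneg
    intro k _
    positivity

lemma fder_bound (n : ℕ) (hn : 2 ≤ n) {ε : ℝ} (hε : 0 < ε) {ρ : ℝ} (hρ : 0 ≤ ρ) :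
    0 ≤ fder n ε ρ ∧ ρ * fder n ε ρ ≤ 3 := by
  have hε2 : (0:ℝ) < ε ^ 2 := by positivity
  rw [fder]
  by_cases h : ε ^ 2 ≤ ρ
  · rw [if_pos h]
    have hρ0 : 0 < ρ := lt_of_lt_of_le hε2 h
    constructor
    · positivity
    · rw [mul_inv_cancel₀ (ne_of_gt hρ0)]; norm_num
  · rw [if_neg h]
    push_neg at h
    refine ⟨fder_nonneg_aux n hn hε hρ h, ?_⟩
    set u : ℝ := 1 - ρ / ε ^ 2 with hu
    have hu0 : 0 ≤ u := by rw [hu, sub_nonneg, div_le_one hε2]; exact h.le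
    have hu1 : u ≤ 1 := by
      rw [hu]
      have : 0 ≤ ρ / ε ^ 2 := by positivity
      linarith
    have hρu : ρ / ε ^ 2 = 1 - u := by rw [hu]; ring
    have hexp : ρ * derq n ε ρ
        = (1 - u) * ((n + 1 : ℝ) * u ^ (n - 1))
          + (1 - u) * ∑ k ∈ Finset.Icc 1 (n - 1), u ^ (k - 1) := by
      have hρeq : ρ = (1 - u) * ε ^ 2 := by
        rw [← hρu]; field_simp
      rw [derq, ← hu, mul_add, Finset.mul_sum, Finset.mul_sum]
      congr 1
      · rw [hρeq]; field_simp
      · apply Finset.sum_congr rfl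
        intro k _
        rw [hρeq]; field_simp
    rw [hexp]
    have hsum : ∑ k ∈ Finset.Icc 1 (n - 1), u ^ (k - 1)
        = ∑ j ∈ Finset.range (n - 1), u ^ j := by
      rw [show Finset.Icc 1 (n - 1) = Finset.Ico 1 n by
        rw [← Finset.Ico_add_one_right_eq_Icc]; congr 1; omega]
      rw [Finset.sum_Ico_eq_sum_range]
      apply Finset.sum_congr rfl
      intro j _
      congr 1
      omega
    have hgeo : (1 - u) * ∑ j ∈ Finset.range (n - 1), u ^ j = 1 - u ^ (n - 1) := by
      have := geom_sum_mul u (n - 1)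
      linarith [this]
    have hBle : (1 - u) * ∑ k ∈ Finset.Icc 1 (n - 1), u ^ (k - 1) ≤ 1 := by
      rw [hsum, hgeo]
      have : (0:ℝ) ≤ u ^ (n - 1) := by positivity
      linarith
    have hAle : (1 - u) * ((n + 1 : ℝ) * u ^ (n - 1)) ≤ 2 := by
      set t : ℝ := 1 - u with ht
      have ht0 : 0 ≤ t := by linarith
      have ht1 : t ≤ 1 := by linarith
      have hb := bernoulli_aux (n - 1) ht0 ht1
      have hut : (1 - t) = u := by rw [ht]; ring
      rw [hut] at hb
      have hun : (0:ℝ) ≤ u ^ (n - 1) := by positivity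
      have hn1 : ((n - 1 : ℕ) : ℝ) = (n : ℝ) - 1 := by
        have : 1 ≤ n := by omega
        push_cast [this]; ring
      rw [hn1] at hb
      have h1 : (n:ℝ) * t ≤ 1 + ((n:ℝ) - 1) * t := by nlinarith
      have h2 : (n:ℝ) * t * u ^ (n-1) ≤ 1 := by nlinarith
      have h3 : t * u ^ (n-1) ≤ 1 := by nlinarith [pow_le_one₀ hu0 hu1 (n := n-1)]
      calc t * ((n + 1 : ℝ) * u ^ (n - 1))
          = (n:ℝ) * t * u ^ (n-1) + t * u ^ (n-1) := by ring
        _ ≤ 1 + 1 := add_le_add h2 h3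
        _ = 2 := by norm_num
    linarith

lemma phiB_deriv_bound (n : ℕ) (hn : 2 ≤ n) {ε : ℝ} (hε : 0 < ε) (τ : ℝ)
    (w₀ : ℝ → ℂ) (hdiff : Differentiable ℝ w₀) (x : ℝ) :
    ‖deriv (fun x => PhiB n ε τ (w₀ x)) x‖ ≤ (1 + 6 * |τ|) * ‖deriv w₀ x‖ := by
  set w : ℂ := w₀ x with hwdef
  set w' : ℂ := deriv w₀ x with hw'def
  have hw : HasDerivAt w₀ w' x := (hdiff x).hasDerivAt
  set G' : ℝ := 2 * ((starRingEnd ℂ) w * w').re with hG'def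
  have hre : HasDerivAt (fun x => (w₀ x).re) w'.re x := by
    have h := Complex.reCLM.hasFDerivAt.comp_hasDerivAt x hw
    simp only [Function.comp_def, Complex.reCLM_apply] at h
    exact h
  have him : HasDerivAt (fun x => (w₀ x).im) w'.im x := by
    have h := Complex.imCLM.hasFDerivAt.comp_hasDerivAt x hw
    simp only [Function.comp_def, Complex.imCLM_apply] at h
    exact h
  have hg : HasDerivAt (fun x => ‖w₀ x‖ ^ 2) G' x := by
    have h1 : (fun x => ‖w₀ x‖ ^ 2)
        = fun x => (w₀ x).re ^ 2 + (w₀ x).im ^ 2 := by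
      funext y
      rw [Complex.sq_norm, Complex.normSq_apply]; ring
    rw [h1]
    have := ((hre.fun_pow 2).fun_add (him.fun_pow 2))
    refine this.congr_deriv ?_
    simp [hG'def, Complex.mul_re]
    ring
  set ρ : ℝ := ‖w‖ ^ 2 with hρdef
  have hρ0 : 0 ≤ ρ := by positivity
  set D : ℝ := fder n ε ρ with hDdef
  have hcomp : HasDerivAt (fun x => freg n ε (‖w₀ x‖ ^ 2)) (D * G') x :=
    by have h := (hasDerivAt_freg n hn hε hρ0).comp x hg; exact h
  set c : ℝ := D * G' with hcdef
  have hinner : HasDerivAt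
      (fun x => -(Complex.I * τ * (freg n ε (‖w₀ x‖ ^ 2) : ℝ)))
      (-(Complex.I * τ * (c : ℝ))) x := by
    exact ((hcomp.ofReal_comp).const_mul (Complex.I * τ)).neg
  set E : ℂ := Complex.exp (-(Complex.I * τ * (freg n ε ρ : ℝ))) with hEdef
  have hexp : HasDerivAt
      (fun x => Complex.exp (-(Complex.I * τ * (freg n ε (‖w₀ x‖ ^ 2) : ℝ))))
      (E * (-(Complex.I * τ * (c : ℝ)))) x := hinner.cexp
  have hPhi : HasDerivAt (fun x => PhiB n ε τ (w₀ x))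
      (w' * E + w * (E * (-(Complex.I * τ * (c : ℝ))))) x := by
    exact hw.fun_mul hexp
  rw [hPhi.deriv]
  have hE1 : ‖E‖ = 1 := by
    simp [hEdef, Complex.norm_exp]
  have hG'le : |G'| ≤ 2 * ‖w‖ * ‖w'‖ := by
    rw [hG'def, abs_mul, _root_.abs_two]
    have := Complex.abs_re_le_norm ((starRingEnd ℂ) w * w')
    rw [norm_mul, Complex.norm_conj] at this
    nlinarith [norm_nonneg w, norm_nonneg w']
  obtain ⟨hD0, hρD⟩ := fder_bound n hn hε hρ0
  have hcle : ‖w‖ * |c| ≤ 6 * ‖w'‖ := by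
    have h1 : |c| ≤ D * (2 * ‖w‖ * ‖w'‖) := by
      rw [hcdef, abs_mul, _root_.abs_of_nonneg hD0]
      exact mul_le_mul_of_nonneg_left hG'le hD0
    have h2 : ‖w‖ * |c| ≤ 2 * (ρ * D) * ‖w'‖ := by
      have := mul_le_mul_of_nonneg_left h1 (norm_nonneg w)
      calc ‖w‖ * |c|
          ≤ ‖w‖ * (D * (2 * ‖w‖ * ‖w'‖)) := this
        _ = 2 * (‖w‖ ^ 2 * D) * ‖w'‖ := by ring
        _ = 2 * (ρ * D) * ‖w'‖ := by rw [hρdef]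
    calc ‖w‖ * |c| ≤ 2 * (ρ * D) * ‖w'‖ := h2
      _ ≤ 2 * 3 * ‖w'‖ := by
          apply mul_le_mul_of_nonneg_right _ (norm_nonneg w')
          linarith
      _ = 6 * ‖w'‖ := by ring
  calc ‖w' * E + w * (E * (-(Complex.I * τ * (c : ℝ))))‖
      ≤ ‖w' * E‖ + ‖w * (E * (-(Complex.I * τ * (c : ℝ))))‖ := norm_add_le _ _
    _ = ‖w'‖ + ‖w‖ * (|τ| * |c|) := by
        rw [norm_mul, hE1, mul_one, norm_mul, norm_mul, hE1, norm_neg, norm_mul, norm_mul]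
        simp [Complex.norm_real, Real.norm_eq_abs]
    _ ≤ ‖w'‖ + |τ| * (6 * ‖w'‖) := by
        have heq : ‖w‖ * (|τ| * |c|) = |τ| * (‖w‖ * |c|) := by
          ring
        rw [heq]
        have := mul_le_mul_of_nonneg_left hcle (abs_nonneg τ)
        linarith
    _ ≤ (1 + 6 * |τ|) * ‖deriv w₀ x‖ := by
        rw [← hw'def]
        nlinarith [norm_nonneg w', abs_nonneg τ]

/-- For `w₀ ∈ H¹(ℝ)`: `Φ_B^τ` conserves the `L²` norm and
`‖∂ₓ Φ_B^τ(w₀)‖_{L²} ≤ (1 + 6|τ|)‖∂ₓ w₀‖_{L²}`. -/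
theorem stmt16 (n : ℕ) (hn : 2 ≤ n) (ε : ℝ) (hε : 0 < ε) (τ : ℝ)
    (w₀ : ℝ → ℂ) (hdiff : Differentiable ℝ w₀)
    (hL2 : MemLp w₀ 2 (volume : Measure ℝ))
    (hdL2 : MemLp (deriv w₀) 2 (volume : Measure ℝ)) :
    eLpNorm (fun x => PhiB n ε τ (w₀ x)) 2 volume = eLpNorm w₀ 2 volume ∧
    eLpNorm (deriv fun x => PhiB n ε τ (w₀ x)) 2 volume ≤
      ENNReal.ofReal (1 + 6 * |τ|) * eLpNorm (deriv w₀) 2 volume := by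
  constructor
  · apply eLpNorm_congr_norm_ae
    filter_upwards with x
    simp [PhiB, Complex.norm_exp]
  · have hc0 : (0:ℝ) ≤ 1 + 6 * |τ| := by positivity
    have hb : ∀ x, ‖deriv (fun x => PhiB n ε τ (w₀ x)) x‖ ≤
        ‖((1 + 6 * |τ| : ℝ) • deriv w₀) x‖ := by
      intro x
      rw [Pi.smul_apply, norm_smul, Real.norm_eq_abs, _root_.abs_of_nonneg hc0]
      exact phiB_deriv_bound n hn hε τ w₀ hdiff x
    calc eLpNorm (deriv fun x => PhiB n ε τ (w₀ x)) 2 volume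
        ≤ eLpNorm ((1 + 6 * |τ| : ℝ) • deriv w₀) 2 volume := eLpNorm_mono hb
      _ = ‖(1 + 6 * |τ| : ℝ)‖₊ * eLpNorm (deriv w₀) 2 volume :=
          eLpNorm_const_smul _ _ _ _
      _ = ENNReal.ofReal (1 + 6 * |τ|) * eLpNorm (deriv w₀) 2 volume := by
          rw [← Real.enorm_eq_ofReal hc0]; rfl
end
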